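/- Let m ≥ 2 be an integer. There exists a constant C > 0 such that for every b > 0, ∫∫_{S^{m−1} × S^{m−1}} (b² + ‖w − z‖²)^{−m} dσ(w) dσ(z) ≤ C / b^{m+1}. -/

import Mathlib

open MeasureTheory Metric Set
open scoped ENNReal

namespace SphereKernelAux

/-- pointwise kernel on the whole space -/
noncomputable def F (m : ℕ) (b : ℝ) (v : EuclideanSpace ℝ (Fin m)) : ℝ≥0∞ :=
  ENNReal.ofReal (((b ^ 2 + ‖v‖ ^ 2) ^ m)⁻¹)

lemma F_ne_top {m : ℕ} {b : ℝ} {v : EuclideanSpace ℝ (Fin m)} : F m b v ≠ ⊤ :=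
  ENNReal.ofReal_ne_top

lemma F_measurable {m : ℕ} (b : ℝ) (hb : 0 < b) : Measurable (F m b) := by
  apply Measurable.ennreal_ofReal
  have : Continuous fun v : EuclideanSpace ℝ (Fin m) => ((b ^ 2 + ‖v‖ ^ 2) ^ m)⁻¹ := by
    apply Continuous.inv₀
    · continuity
    · intro v; positivity
  exact this.measurable

/-- finiteness of the normalized whole-space integral -/
lemma Jone_lt_top (m : ℕ) (hm : 2 ≤ m) :
    (∫⁻ x : EuclideanSpace ℝ (Fin m), F m 1 x) < ⊤ := by
  have hfin : (∫⁻ x : EuclideanSpace ℝ (Fin m),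
      ENNReal.ofReal ((1 + ‖x‖) ^ (-((m:ℝ) + 1)))) < ⊤ := by
    apply finite_integral_one_add_norm
    rw [finrank_euclideanSpace, Fintype.card_fin]
    linarith
  have hb : ∀ x : EuclideanSpace ℝ (Fin m),
      F m 1 x ≤ ENNReal.ofReal ((2:ℝ) ^ m) * ENNReal.ofReal ((1 + ‖x‖) ^ (-((m:ℝ) + 1))) := by
    intro x
    rw [F, ← ENNReal.ofReal_mul (by positivity)]
    apply ENNReal.ofReal_le_ofReal
    set t := ‖x‖ with ht
    have ht0 : 0 ≤ t := norm_nonneg x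
    have h1t : (0:ℝ) < 1 + t := by linarith
    rw [show (-((m:ℝ)+1)) = -((m+1 : ℕ) : ℝ) by push_cast; ring,
      Real.rpow_neg h1t.le, Real.rpow_natCast]
    have key : (1 + t) ^ (m + 1) ≤ 2 ^ m * ((1:ℝ) ^ 2 + t ^ 2) ^ m := by
      calc (1 + t) ^ (m + 1) ≤ (1 + t) ^ (2 * m) := by
              apply pow_le_pow_right₀ (by linarith)
              omega
        _ = ((1 + t) ^ 2) ^ m := by rw [← pow_mul]
        _ ≤ (2 * ((1:ℝ) ^ 2 + t ^ 2)) ^ m := by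
              apply pow_le_pow_left₀ (by positivity)
              nlinarith [sq_nonneg (1 - t)]
        _ = 2 ^ m * ((1:ℝ) ^ 2 + t ^ 2) ^ m := by rw [mul_pow]
    have hp1 : (0:ℝ) < ((1:ℝ) ^ 2 + t ^ 2) ^ m := by positivity
    have hp2 : (0:ℝ) < (1 + t) ^ (m + 1) := by positivity
    rw [← one_div, ← one_div, mul_one_div, div_le_div_iff₀ hp1 hp2, one_mul]
    exact key
  calc (∫⁻ x : EuclideanSpace ℝ (Fin m), F m 1 x)
      ≤ ∫⁻ x : EuclideanSpace ℝ (Fin m),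
          ENNReal.ofReal ((2:ℝ) ^ m) * ENNReal.ofReal ((1 + ‖x‖) ^ (-((m:ℝ) + 1))) :=
        lintegral_mono hb
    _ = ENNReal.ofReal ((2:ℝ) ^ m) * ∫⁻ x : EuclideanSpace ℝ (Fin m),
          ENNReal.ofReal ((1 + ‖x‖) ^ (-((m:ℝ) + 1))) :=
        lintegral_const_mul' _ _ ENNReal.ofReal_ne_top
    _ < ⊤ := ENNReal.mul_lt_top ENNReal.ofReal_lt_top hfin

/-- scaling -/
lemma J_scaling (m : ℕ) {b : ℝ} (hb : 0 < b) :
    (∫⁻ x : EuclideanSpace ℝ (Fin m), F m b x) =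
      ENNReal.ofReal ((b ^ m)⁻¹) * ∫⁻ x : EuclideanSpace ℝ (Fin m), F m 1 x := by
  have hmap := Measure.map_addHaar_smul (volume : Measure (EuclideanSpace ℝ (Fin m))) hb.ne'
  rw [finrank_euclideanSpace, Fintype.card_fin] at hmap
  have h1 : ∫⁻ x : EuclideanSpace ℝ (Fin m), F m b (b • x) =
      ENNReal.ofReal (|(b ^ m)⁻¹|) * ∫⁻ x : EuclideanSpace ℝ (Fin m), F m b x := by
    rw [← lintegral_map (F_measurable b hb) (measurable_const_smul b), hmap,
      lintegral_smul_measure, smul_eq_mul]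
  have h2 : ∀ x : EuclideanSpace ℝ (Fin m),
      F m b (b • x) = ENNReal.ofReal ((b ^ (2 * m))⁻¹) * F m 1 x := by
    intro x
    unfold F
    rw [← ENNReal.ofReal_mul (by positivity)]
    congr 1
    rw [norm_smul, Real.norm_eq_abs, abs_of_pos hb]
    rw [mul_pow, show b ^ 2 + b ^ 2 * ‖x‖ ^ 2 = b ^ 2 * (1 + ‖x‖ ^ 2) by ring,
      mul_pow, ← pow_mul, mul_inv, one_pow]
  rw [funext h2, lintegral_const_mul' _ _ ENNReal.ofReal_ne_top] at h1
  have habs : |(b ^ m)⁻¹| = (b ^ m)⁻¹ := abs_of_pos (by positivity)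
  rw [habs] at h1
  have hcancel : ENNReal.ofReal (b ^ m) * ENNReal.ofReal ((b ^ m)⁻¹) = 1 := by
    rw [← ENNReal.ofReal_mul (by positivity), mul_inv_cancel₀ (by positivity)]
    simp
  calc (∫⁻ x : EuclideanSpace ℝ (Fin m), F m b x)
      = ENNReal.ofReal (b ^ m) * (ENNReal.ofReal ((b ^ m)⁻¹) *
          ∫⁻ x : EuclideanSpace ℝ (Fin m), F m b x) := by
        rw [← mul_assoc, hcancel, one_mul]
    _ = ENNReal.ofReal (b ^ m) * (ENNReal.ofReal ((b ^ (2 * m))⁻¹) *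
          ∫⁻ x : EuclideanSpace ℝ (Fin m), F m 1 x) := by rw [← h1]
    _ = ENNReal.ofReal ((b ^ m)⁻¹) * ∫⁻ x : EuclideanSpace ℝ (Fin m), F m 1 x := by
        rw [← mul_assoc, ← ENNReal.ofReal_mul (by positivity)]
        congr 2
        rw [two_mul, pow_add, mul_inv]
        field_simp

/-- key pointwise inequality -/
lemma keyIneq (m : ℕ) {b r : ℝ} (hb : 0 < b) (hr : r ∈ Ioc (1-b) 1)
    {w z : EuclideanSpace ℝ (Fin m)} (hw : ‖w‖ = 1) :
    ((b ^ 2 + ‖w - z‖ ^ 2) ^ m)⁻¹ ≤ 3 ^ m * ((b ^ 2 + ‖r • w - z‖ ^ 2) ^ m)⁻¹ := by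
  have h1 : ‖r • w - z‖ ≤ ‖w - z‖ + b := by
    have e : r • w - z = (w - z) + (r - 1) • w := by module
    calc ‖r • w - z‖ = ‖(w - z) + (r - 1) • w‖ := by rw [e]
      _ ≤ ‖w - z‖ + ‖(r - 1) • w‖ := norm_add_le _ _
      _ = ‖w - z‖ + |r - 1| := by rw [norm_smul, Real.norm_eq_abs, hw, mul_one]
      _ ≤ ‖w - z‖ + b := by
          have : |r - 1| ≤ b := abs_le.mpr ⟨by linarith [hr.1], by linarith [hr.2]⟩
          linarith
  have h2 : b ^ 2 + ‖r • w - z‖ ^ 2 ≤ 3 * (b ^ 2 + ‖w - z‖ ^ 2) := by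
    have hsq : ‖r • w - z‖ ^ 2 ≤ (‖w - z‖ + b) ^ 2 :=
      pow_le_pow_left₀ (norm_nonneg _) h1 2
    nlinarith [norm_nonneg (w - z), sq_nonneg (‖w - z‖ - b)]
  have h3 : (b ^ 2 + ‖r • w - z‖ ^ 2) ^ m ≤ 3 ^ m * (b ^ 2 + ‖w - z‖ ^ 2) ^ m := by
    rw [← mul_pow]
    exact pow_le_pow_left₀ (by positivity) h2 m
  have hp1 : (0:ℝ) < (b ^ 2 + ‖w - z‖ ^ 2) ^ m := by positivity
  have hp2 : (0:ℝ) < (b ^ 2 + ‖r • w - z‖ ^ 2) ^ m := by positivity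
  rw [← one_div, ← one_div, mul_one_div, div_le_div_iff₀ hp1 hp2, one_mul]
  linarith

/-- lower bound for the radial measure of the shell -/
lemma muA_lb (m : ℕ) {b : ℝ} (hb : 0 < b) (hb2 : b ≤ 1/2) :
    ENNReal.ofReal ((2:ℝ)⁻¹ ^ (m - 1) * b) ≤
      Measure.volumeIoiPow (m - 1) (Subtype.val ⁻¹' Ioc (1-b) 1) := by
  set A : Set (Ioi (0:ℝ)) := Subtype.val ⁻¹' Ioc (1-b) 1 with hAdef
  have hA : MeasurableSet A := measurable_subtype_coe measurableSet_Ioc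
  rw [Measure.volumeIoiPow, withDensity_apply _ hA]
  rw [hAdef, setLIntegral_subtype measurableSet_Ioi _ (fun a : ℝ => ENNReal.ofReal (a ^ (m-1)))]
  rw [Subtype.image_preimage_coe]
  have himg : Ioi (0:ℝ) ∩ Ioc (1-b) 1 = Ioc (1-b) 1 := by
    apply inter_eq_right.mpr
    intro x hx
    simp only [mem_Ioi]
    have := hx.1
    linarith
  rw [himg]
  have hmono : ∫⁻ a in Ioc (1-b) 1, ENNReal.ofReal ((2:ℝ)⁻¹ ^ (m-1)) ∂volume ≤
      ∫⁻ a in Ioc (1-b) 1, ENNReal.ofReal (a ^ (m-1)) ∂volume := by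
    apply setLIntegral_mono (by fun_prop)
    intro x hx
    apply ENNReal.ofReal_le_ofReal
    apply pow_le_pow_left₀ (by norm_num)
    have := hx.1; linarith
  calc ENNReal.ofReal ((2:ℝ)⁻¹ ^ (m - 1) * b)
      = ENNReal.ofReal ((2:ℝ)⁻¹ ^ (m-1)) * ENNReal.ofReal b := by
        rw [← ENNReal.ofReal_mul (by positivity)]
    _ = ∫⁻ _ in Ioc (1-b) 1, ENNReal.ofReal ((2:ℝ)⁻¹ ^ (m-1)) ∂volume := by
        rw [setLIntegral_const, Real.volume_Ioc]
        congr 1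
        ring_nf
    _ ≤ _ := hmono

/-- the inner-integral bound for small `b` -/
lemma inner_bound (m : ℕ) (hm : 2 ≤ m) {b : ℝ} (hb : 0 < b) (hb2 : b ≤ 1/2)
    (z : EuclideanSpace ℝ (Fin m)) :
    (∫⁻ w : Metric.sphere (0 : EuclideanSpace ℝ (Fin m)) 1,
        F m b ((w : EuclideanSpace ℝ (Fin m)) - z)
          ∂((volume : Measure (EuclideanSpace ℝ (Fin m))).toSphere)) *
      ENNReal.ofReal ((2 : ℝ)⁻¹ ^ (m - 1) * b) ≤
    ENNReal.ofReal ((3 : ℝ) ^ m) * ∫⁻ x : EuclideanSpace ℝ (Fin m), F m b x := by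
  set σ := (volume : Measure (EuclideanSpace ℝ (Fin m))).toSphere with hσ
  set μ₂ := Measure.volumeIoiPow (m - 1) with hμ₂
  set A : Set (Ioi (0:ℝ)) := Subtype.val ⁻¹' Ioc (1-b) 1 with hAdef
  have hA : MeasurableSet A := measurable_subtype_coe measurableSet_Ioc
  have MP := (volume : Measure (EuclideanSpace ℝ (Fin m))).measurePreserving_homeomorphUnitSphereProd
  rw [show Module.finrank ℝ (EuclideanSpace ℝ (Fin m)) = m by simp [finrank_euclideanSpace]] at MP
  set G : Metric.sphere (0 : (EuclideanSpace ℝ (Fin m))) 1 × Ioi (0:ℝ) → ℝ≥0∞ :=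
    fun p => F m b ((p.2 : ℝ) • (p.1 : (EuclideanSpace ℝ (Fin m))) - z) * A.indicator 1 p.2 with hG
  have hGmeas : Measurable G := by
    apply Measurable.mul
    · apply (F_measurable b hb).comp
      have : Continuous fun p : Metric.sphere (0 : (EuclideanSpace ℝ (Fin m))) 1 × Ioi (0:ℝ) =>
          (p.2 : ℝ) • (p.1 : (EuclideanSpace ℝ (Fin m))) - z := by
        exact ((continuous_subtype_val.comp continuous_snd).smul
          (continuous_subtype_val.comp continuous_fst)).sub continuous_const
      exact this.measurable
    · exact (measurable_one.indicator hA).comp measurable_snd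
  have hFw : Measurable fun w : Metric.sphere (0 : (EuclideanSpace ℝ (Fin m))) 1 =>
      F m b ((w : (EuclideanSpace ℝ (Fin m))) - z) :=
    (F_measurable b hb).comp ((continuous_subtype_val.sub continuous_const).measurable)
  calc (∫⁻ w : Metric.sphere (0 : (EuclideanSpace ℝ (Fin m))) 1,
          F m b ((w : (EuclideanSpace ℝ (Fin m))) - z) ∂σ) *
        ENNReal.ofReal ((2 : ℝ)⁻¹ ^ (m - 1) * b)
      ≤ (∫⁻ w : Metric.sphere (0 : (EuclideanSpace ℝ (Fin m))) 1,
          F m b ((w : (EuclideanSpace ℝ (Fin m))) - z) ∂σ) * μ₂ A :=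
        mul_le_mul_right (muA_lb m hb hb2) _
    _ = ∫⁻ w : Metric.sphere (0 : (EuclideanSpace ℝ (Fin m))) 1,
          F m b ((w : (EuclideanSpace ℝ (Fin m))) - z) * μ₂ A ∂σ :=
        (lintegral_mul_const _ hFw).symm
    _ = ∫⁻ w : Metric.sphere (0 : (EuclideanSpace ℝ (Fin m))) 1, ∫⁻ r : Ioi (0:ℝ),
          F m b ((w : (EuclideanSpace ℝ (Fin m))) - z) * A.indicator 1 r ∂μ₂ ∂σ := by
        apply lintegral_congr
        intro w
        rw [lintegral_const_mul' _ _ F_ne_top, lintegral_indicator_one hA]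
    _ ≤ ∫⁻ w : Metric.sphere (0 : (EuclideanSpace ℝ (Fin m))) 1, ∫⁻ r : Ioi (0:ℝ),
          ENNReal.ofReal ((3:ℝ) ^ m) * G (w, r) ∂μ₂ ∂σ := by
        apply lintegral_mono; intro w
        apply lintegral_mono; intro r
        by_cases hr : r ∈ A
        · simp only [hG, indicator_of_mem hr, Pi.one_apply, mul_one]
          have hw : ‖(w : EuclideanSpace ℝ (Fin m))‖ = 1 :=
            mem_sphere_zero_iff_norm.mp w.2
          have hrm : (r : ℝ) ∈ Ioc (1-b) 1 := hr
          simp only [F]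
          rw [← ENNReal.ofReal_mul (by positivity)]
          exact ENNReal.ofReal_le_ofReal (keyIneq m hb hrm hw)
        · simp [hG, indicator_of_notMem hr]
    _ = ENNReal.ofReal ((3:ℝ) ^ m) *
          ∫⁻ w : Metric.sphere (0 : (EuclideanSpace ℝ (Fin m))) 1, ∫⁻ r : Ioi (0:ℝ),
          G (w, r) ∂μ₂ ∂σ := by
        rw [← lintegral_const_mul' _ _ ENNReal.ofReal_ne_top]
        apply lintegral_congr
        intro w
        rw [lintegral_const_mul' _ _ ENNReal.ofReal_ne_top]
    _ = ENNReal.ofReal ((3:ℝ) ^ m) * ∫⁻ p, G p ∂(σ.prod μ₂) := by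
        rw [lintegral_prod _ hGmeas.aemeasurable]
    _ = ENNReal.ofReal ((3:ℝ) ^ m) *
          ∫⁻ x : ({0}ᶜ : Set (EuclideanSpace ℝ (Fin m))),
            G (homeomorphUnitSphereProd (EuclideanSpace ℝ (Fin m)) x)
            ∂((volume : Measure (EuclideanSpace ℝ (Fin m))).comap Subtype.val) := by
        rw [MP.lintegral_comp hGmeas]
    _ ≤ ENNReal.ofReal ((3:ℝ) ^ m) *
          ∫⁻ x : ({0}ᶜ : Set (EuclideanSpace ℝ (Fin m))),
            F m b ((x : (EuclideanSpace ℝ (Fin m))) - z)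
            ∂((volume : Measure (EuclideanSpace ℝ (Fin m))).comap Subtype.val) := by
        apply mul_le_mul_right
        apply lintegral_mono
        intro x
        have hx0 : (x : (EuclideanSpace ℝ (Fin m))) ≠ 0 := x.2
        have hsmul : ((homeomorphUnitSphereProd (EuclideanSpace ℝ (Fin m)) x).2 : ℝ) •
            ((homeomorphUnitSphereProd (EuclideanSpace ℝ (Fin m)) x).1 :
              (EuclideanSpace ℝ (Fin m))) = (x : (EuclideanSpace ℝ (Fin m))) := by
          simp [homeomorphUnitSphereProd_apply_fst_coe,
            homeomorphUnitSphereProd_apply_snd_coe,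
            smul_inv_smul₀ (norm_ne_zero_iff.mpr hx0)]
        rw [hG]
        simp only [hsmul]
        calc F m b ((x : (EuclideanSpace ℝ (Fin m))) - z) *
              A.indicator 1 (homeomorphUnitSphereProd (EuclideanSpace ℝ (Fin m)) x).2
            ≤ F m b ((x : (EuclideanSpace ℝ (Fin m))) - z) * 1 := by
              apply mul_le_mul_right
              by_cases hmem : (homeomorphUnitSphereProd (EuclideanSpace ℝ (Fin m)) x).2 ∈ A <;>
                simp [hmem]
          _ = F m b ((x : (EuclideanSpace ℝ (Fin m))) - z) := mul_one _
    _ = ENNReal.ofReal ((3:ℝ) ^ m) *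
          ∫⁻ x in ({0}ᶜ : Set (EuclideanSpace ℝ (Fin m))), F m b (x - z)
            ∂(volume : Measure (EuclideanSpace ℝ (Fin m))) := by
        rw [lintegral_subtype_comap (measurableSet_singleton (0 : EuclideanSpace ℝ (Fin m))).compl
          (fun y => F m b (y - z))]
    _ ≤ ENNReal.ofReal ((3:ℝ) ^ m) *
          ∫⁻ x, F m b (x - z) ∂(volume : Measure (EuclideanSpace ℝ (Fin m))) :=
        mul_le_mul_right (setLIntegral_le_lintegral _ _) _
    _ = ENNReal.ofReal ((3:ℝ) ^ m) * ∫⁻ x : (EuclideanSpace ℝ (Fin m)), F m b x := by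
        rw [lintegral_sub_right_eq_self (fun x => F m b x) z]

end SphereKernelAux

open MeasureTheory Metric

/-- The canonical surface measure on the unit sphere `S^{m−1} ⊂ ℝ^m`. -/
noncomputable def sphereMeasure' (m : ℕ) :
    Measure (Metric.sphere (0 : EuclideanSpace ℝ (Fin m)) 1) :=
  (volume : Measure (EuclideanSpace ℝ (Fin m))).toSphere

/-- **Kernel bound on the sphere.**  For `m ≥ 2` there is a constant `C > 0` such that
for every `b > 0`,
`∬_{S^{m−1} × S^{m−1}} (b² + ‖w − z‖²)^{−m} dσ(w) dσ(z) ≤ C / b^{m+1}`. -/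
theorem sphere_kernel_bound (m : ℕ) (hm : 2 ≤ m) :
    ∃ C : ℝ, 0 < C ∧
      ∀ b : ℝ, 0 < b →
        (∫⁻ z : Metric.sphere (0 : EuclideanSpace ℝ (Fin m)) 1,
            ∫⁻ w : Metric.sphere (0 : EuclideanSpace ℝ (Fin m)) 1,
              ENNReal.ofReal
                (((b ^ 2 + ‖(w : EuclideanSpace ℝ (Fin m)) -
                    (z : EuclideanSpace ℝ (Fin m))‖ ^ 2) ^ m)⁻¹)
              ∂(sphereMeasure' m) ∂(sphereMeasure' m)) ≤
          ENNReal.ofReal (C / b ^ (m + 1)) := by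
  classical
  open SphereKernelAux in
  set σ := (volume : Measure (EuclideanSpace ℝ (Fin m))).toSphere with hσ
  have hJ1 := SphereKernelAux.Jone_lt_top m hm
  set J1r := (∫⁻ x : EuclideanSpace ℝ (Fin m), SphereKernelAux.F m 1 x).toReal with hJ1r
  have hJ1rnn : 0 ≤ J1r := ENNReal.toReal_nonneg
  have hJ1eq : (∫⁻ x : EuclideanSpace ℝ (Fin m), SphereKernelAux.F m 1 x) =
      ENNReal.ofReal J1r := (ENNReal.ofReal_toReal hJ1.ne).symm
  set Sr := (σ Set.univ).toReal with hSr
  have hSrnn : 0 ≤ Sr := ENNReal.toReal_nonneg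
  have hSeq : σ Set.univ = ENNReal.ofReal Sr := (ENNReal.ofReal_toReal (measure_ne_top _ _)).symm
  set C1 : ℝ := (3:ℝ) ^ m * 2 ^ (m - 1) * J1r * Sr with hC1
  set C2 : ℝ := 2 ^ (m - 1) * Sr * Sr with hC2
  have hC1nn : 0 ≤ C1 := by positivity
  have hC2nn : 0 ≤ C2 := by positivity
  refine ⟨max C1 C2 + 1, by positivity, ?_⟩
  intro b hb
  have hbp : (0:ℝ) < b ^ (m + 1) := by positivity
  rcases le_or_gt b (1/2) with hb2 | hb2
  · -- small b
    have hinner : ∀ z : Metric.sphere (0 : EuclideanSpace ℝ (Fin m)) 1,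
        (∫⁻ w : Metric.sphere (0 : EuclideanSpace ℝ (Fin m)) 1,
          SphereKernelAux.F m b ((w : EuclideanSpace ℝ (Fin m)) -
            (z : EuclideanSpace ℝ (Fin m))) ∂σ) ≤
        (ENNReal.ofReal ((3:ℝ) ^ m) * ∫⁻ x : EuclideanSpace ℝ (Fin m), SphereKernelAux.F m b x) /
          ENNReal.ofReal ((2:ℝ)⁻¹ ^ (m - 1) * b) := by
      intro z
      rw [ENNReal.le_div_iff_mul_le
        (Or.inl (ENNReal.ofReal_pos.mpr (by positivity)).ne')
        (Or.inl ENNReal.ofReal_ne_top)]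
      exact SphereKernelAux.inner_bound m hm hb hb2 (z : EuclideanSpace ℝ (Fin m))
    have hIb : (∫⁻ z : Metric.sphere (0 : EuclideanSpace ℝ (Fin m)) 1,
        ∫⁻ w : Metric.sphere (0 : EuclideanSpace ℝ (Fin m)) 1,
          ENNReal.ofReal (((b ^ 2 + ‖(w : EuclideanSpace ℝ (Fin m)) -
            (z : EuclideanSpace ℝ (Fin m))‖ ^ 2) ^ m)⁻¹)
          ∂(sphereMeasure' m) ∂(sphereMeasure' m)) ≤
        ((ENNReal.ofReal ((3:ℝ) ^ m) * ∫⁻ x : EuclideanSpace ℝ (Fin m), SphereKernelAux.F m b x) /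
          ENNReal.ofReal ((2:ℝ)⁻¹ ^ (m - 1) * b)) * σ Set.univ := by
      rw [show sphereMeasure' m = σ from rfl]
      calc _ ≤ ∫⁻ _ : Metric.sphere (0 : EuclideanSpace ℝ (Fin m)) 1,
            (ENNReal.ofReal ((3:ℝ) ^ m) *
              ∫⁻ x : EuclideanSpace ℝ (Fin m), SphereKernelAux.F m b x) /
            ENNReal.ofReal ((2:ℝ)⁻¹ ^ (m - 1) * b) ∂σ := lintegral_mono fun z => hinner z
        _ = _ := lintegral_const _
    refine hIb.trans ?_
    set Y : ℝ := (2:ℝ)⁻¹ ^ (m - 1) * b with hY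
    have hYpos : 0 < Y := by rw [hY]; positivity
    have e1 : ENNReal.ofReal ((3:ℝ) ^ m) *
        (∫⁻ x : EuclideanSpace ℝ (Fin m), SphereKernelAux.F m b x) =
        ENNReal.ofReal ((3:ℝ) ^ m * ((b ^ m)⁻¹ * J1r)) := by
      rw [SphereKernelAux.J_scaling m hb, hJ1eq, ← ENNReal.ofReal_mul (by positivity),
        ← ENNReal.ofReal_mul (by positivity)]
    have e2 : ENNReal.ofReal ((3:ℝ) ^ m * ((b ^ m)⁻¹ * J1r)) / ENNReal.ofReal Y =
        ENNReal.ofReal ((3:ℝ) ^ m * ((b ^ m)⁻¹ * J1r) / Y) :=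
      (ENNReal.ofReal_div_of_pos hYpos).symm
    rw [e1, e2, hSeq, ← ENNReal.ofReal_mul (by positivity)]
    apply ENNReal.ofReal_le_ofReal
    have heq : (3:ℝ) ^ m * ((b ^ m)⁻¹ * J1r) / Y * Sr = C1 / b ^ (m + 1) := by
      rw [hY, hC1, inv_pow, pow_succ]
      field_simp
      try ring
      try exact Or.inl trivial
    rw [heq]
    gcongr
    have := le_max_left C1 C2
    linarith
  · -- large b
    rw [show sphereMeasure' m = σ from rfl]
    have hb2m : (0:ℝ) < b ^ (2 * m) := by positivity
    have hpt : ∀ v : EuclideanSpace ℝ (Fin m),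
        ENNReal.ofReal (((b ^ 2 + ‖v‖ ^ 2) ^ m)⁻¹) ≤ ENNReal.ofReal ((b ^ (2 * m))⁻¹) := by
      intro v
      apply ENNReal.ofReal_le_ofReal
      have h1 : b ^ (2 * m) ≤ (b ^ 2 + ‖v‖ ^ 2) ^ m := by
        rw [pow_mul]
        exact pow_le_pow_left₀ (by positivity) (by nlinarith [sq_nonneg ‖v‖]) m
      exact inv_anti₀ hb2m h1
    have hinner : ∀ z : Metric.sphere (0 : EuclideanSpace ℝ (Fin m)) 1,
        (∫⁻ w : Metric.sphere (0 : EuclideanSpace ℝ (Fin m)) 1,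
          ENNReal.ofReal (((b ^ 2 + ‖(w : EuclideanSpace ℝ (Fin m)) -
            (z : EuclideanSpace ℝ (Fin m))‖ ^ 2) ^ m)⁻¹) ∂σ) ≤
          ENNReal.ofReal ((b ^ (2 * m))⁻¹) * σ Set.univ := by
      intro z
      calc _ ≤ ∫⁻ _ : Metric.sphere (0 : EuclideanSpace ℝ (Fin m)) 1,
            ENNReal.ofReal ((b ^ (2 * m))⁻¹) ∂σ := lintegral_mono fun w => hpt _
        _ = _ := lintegral_const _
    calc (∫⁻ z : Metric.sphere (0 : EuclideanSpace ℝ (Fin m)) 1,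
            ∫⁻ w : Metric.sphere (0 : EuclideanSpace ℝ (Fin m)) 1,
              ENNReal.ofReal (((b ^ 2 + ‖(w : EuclideanSpace ℝ (Fin m)) -
                (z : EuclideanSpace ℝ (Fin m))‖ ^ 2) ^ m)⁻¹) ∂σ ∂σ)
        ≤ ∫⁻ _ : Metric.sphere (0 : EuclideanSpace ℝ (Fin m)) 1,
            ENNReal.ofReal ((b ^ (2 * m))⁻¹) * σ Set.univ ∂σ :=
          lintegral_mono fun z => hinner z
      _ = ENNReal.ofReal ((b ^ (2 * m))⁻¹) * σ Set.univ * σ Set.univ := lintegral_const _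
      _ = ENNReal.ofReal ((b ^ (2 * m))⁻¹ * Sr * Sr) := by
          rw [hSeq, ← ENNReal.ofReal_mul (by positivity),
            ← ENNReal.ofReal_mul (by positivity)]
      _ ≤ ENNReal.ofReal ((max C1 C2 + 1) / b ^ (m + 1)) := by
          apply ENNReal.ofReal_le_ofReal
          have h2b : (1:ℝ) ≤ 2 * b := by linarith
          have h1p : (1:ℝ) ≤ (2 * b) ^ (m - 1) := one_le_pow₀ h2b
          have key : b ^ (m + 1) ≤ 2 ^ (m - 1) * b ^ (2 * m) := by
            calc b ^ (m + 1) = b ^ (m + 1) * 1 := (mul_one _).symm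
              _ ≤ b ^ (m + 1) * (2 * b) ^ (m - 1) :=
                  mul_le_mul_of_nonneg_left h1p (by positivity)
              _ = 2 ^ (m - 1) * b ^ (2 * m) := by
                  rw [mul_pow, show 2 * m = (m + 1) + (m - 1) from by omega, pow_add]
                  ring
          have hstep : (b ^ (2 * m))⁻¹ * Sr * Sr ≤ C2 / b ^ (m + 1) := by
            rw [show (b ^ (2 * m))⁻¹ * Sr * Sr = (Sr * Sr) / b ^ (2 * m) from by ring,
              div_le_div_iff₀ hb2m hbp, hC2]
            nlinarith [mul_le_mul_of_nonneg_left key (mul_nonneg hSrnn hSrnn)]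
          refine hstep.trans ?_
          gcongr
          have := le_max_right C1 C2
          linarith
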